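/- The characteristic polynomial of the matrix H above factors as (x+2)^{N-1} · ((x+2)(x - H_{11}) - 4ξ²); in particular H has eigenvalue -2 with multiplicity at least N-1, and the other two eigenvalues are the roots of x² + (2 - H_{11})x - 2a = 0. -/

import Mathlib

open Polynomial

/-- The Hessian matrix of an agent's utility in the private-goods mechanism. -/
noncomputable def hessPvt (N : ℕ) (a ξ : ℝ) (i₀ : Fin N) :
    Matrix (Fin (N + 1)) (Fin (N + 1)) ℝ :=
  fun i j =>
    if i = 0 ∧ j = 0 then a - 2 * ξ ^ 2
    else if (i = 0 ∧ j = i₀.succ) ∨ (i = i₀.succ ∧ j = 0) then 2 * ξ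
    else if i = j then -2
    else 0

lemma charpoly_diag_const {n : Type*} [Fintype n] [DecidableEq n] (c : ℝ) :
    (Matrix.diagonal (fun _ : n => c)).charpoly = (X - C c) ^ (Fintype.card n) := by
  have h : Matrix.charmatrix (Matrix.diagonal (fun _ : n => c)) =
      Matrix.diagonal (fun _ : n => (X : ℝ[X]) - C c) := by
    ext i j
    by_cases hij : i = j
    · subst hij; simp
    · rw [Matrix.charmatrix_apply_ne _ _ _ hij]
      simp [Matrix.diagonal_apply_ne _ hij]
  rw [Matrix.charpoly, h, Matrix.det_diagonal]
  simp

/-- the characteristic polynomial of `H` factors as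
`(x+2)^(N-1) ((x+2)(x - H₁₁) - 4ξ²)`; in particular `-2` is an eigenvalue of
multiplicity at least `N-1`, and every other eigenvalue is a root of
`x² + (2 - H₁₁) x - 2a = 0`. -/
theorem stmt1 (N : ℕ) (hN : 1 ≤ N) (a ξ : ℝ) (i₀ : Fin N) :
    (hessPvt N a ξ i₀).charpoly =
      (X + C 2) ^ (N - 1) *
        ((X + C 2) * (X - C (a - 2 * ξ ^ 2)) - C (4 * ξ ^ 2)) ∧
    N - 1 ≤ (hessPvt N a ξ i₀).charpoly.rootMultiplicity (-2) ∧
    ∀ x : ℝ, (hessPvt N a ξ i₀).charpoly.IsRoot x → x ≠ -2 →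
      x ^ 2 + (2 - (a - 2 * ξ ^ 2)) * x - 2 * a = 0 := by
  set k : Fin (N + 1) := i₀.succ with hkdef
  have hk : k ≠ 0 := Fin.succ_ne_zero i₀
  set A : Matrix (Fin 2) (Fin 2) ℝ := !![a - 2 * ξ ^ 2, 2 * ξ; 2 * ξ, -2] with hAdef
  set D : Matrix {x : Fin (N + 1) // ¬(x = 0 ∨ x = k)}
      {x : Fin (N + 1) // ¬(x = 0 ∨ x = k)} ℝ :=
    Matrix.diagonal (fun _ => (-2 : ℝ)) with hDdef
  set f : Fin 2 ⊕ {x : Fin (N + 1) // ¬(x = 0 ∨ x = k)} → Fin (N + 1) :=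
    Sum.elim ![0, k] Subtype.val with hfdef
  have hcard2 : Fintype.card {x : Fin (N+1) // x = 0 ∨ x = k} = 2 := by
    rw [Fintype.card_subtype]
    have : (Finset.univ.filter (fun x : Fin (N+1) => x = 0 ∨ x = k)) = {0, k} := by
      ext x; simp
    rw [this, Finset.card_insert_of_notMem (by simpa using hk.symm), Finset.card_singleton]
  have hcardS : Fintype.card {x : Fin (N+1) // ¬(x = 0 ∨ x = k)} = N - 1 := by
    have h := Fintype.card_subtype_compl (fun x : Fin (N+1) => x = 0 ∨ x = k)
    rw [hcard2, Fintype.card_fin] at h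
    omega
  have hfinj : Function.Injective f := by
    rintro (p | ⟨s, hs⟩) (q | ⟨t, ht⟩) h
    · fin_cases p <;> fin_cases q <;>
        simp only [hfdef, Sum.elim_inl, Matrix.cons_val_zero, Matrix.cons_val_one,
          Matrix.head_cons] at h <;>
        first | rfl | exact absurd h.symm hk | exact absurd h hk
    · push_neg at ht
      fin_cases p <;> simp_all [hfdef] <;> exact absurd h.symm (by tauto)
    · push_neg at hs
      fin_cases q <;> simp_all [hfdef] <;> exact absurd h (by tauto)
    · simp only [hfdef, Sum.elim_inr] at h
      exact congrArg Sum.inr (Subtype.ext h)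
  have hfbij : Function.Bijective f := by
    rw [Fintype.bijective_iff_injective_and_card]
    refine ⟨hfinj, ?_⟩
    rw [Fintype.card_sum, Fintype.card_fin, Fintype.card_fin, hcardS]
    omega
  set e := Equiv.ofBijective f hfbij with hedef
  have key : ∀ p q, hessPvt N a ξ i₀ (e p) (e q) = Matrix.fromBlocks A 0 0 D p q := by
    rintro (p | ⟨s, hs⟩) (q | ⟨t, ht⟩)
    · fin_cases p <;> fin_cases q <;>
        simp [hedef, hfdef, hessPvt, hk, Matrix.fromBlocks, hAdef, hkdef]
    · push_neg at ht
      fin_cases p <;>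
        simp [hedef, hfdef, hessPvt, hk, ht.1, ht.2, (ht.1).symm, (ht.2).symm,
          Matrix.fromBlocks, hkdef, Ne.symm ht.1, Ne.symm ht.2,
          (show t ≠ i₀.succ from ht.2), Ne.symm (show t ≠ i₀.succ from ht.2)]
    · push_neg at hs
      fin_cases q <;>
        simp [hedef, hfdef, hessPvt, hk, hs.1, hs.2, Matrix.fromBlocks, hkdef,
          Ne.symm hs.1, Ne.symm hs.2,
          (show s ≠ i₀.succ from hs.2), Ne.symm (show s ≠ i₀.succ from hs.2)]
    · push_neg at hs; push_neg at ht
      simp only [hedef, Equiv.ofBijective_apply, hfdef, Sum.elim_inr]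
      simp [hessPvt, hs.1, hs.2, ht.1, ht.2, Matrix.fromBlocks, hDdef,
        Matrix.diagonal_apply, Subtype.ext_iff]
  have key2 : hessPvt N a ξ i₀ = Matrix.reindex e e (Matrix.fromBlocks A 0 0 D) := by
    ext i j
    rw [Matrix.reindex_apply, Matrix.submatrix_apply,
      ← key (e.symm i) (e.symm j), Equiv.apply_symm_apply, Equiv.apply_symm_apply]
  have hA : A.charpoly = (X + C 2) * (X - C (a - 2 * ξ ^ 2)) - C (4 * ξ ^ 2) := by
    rw [Matrix.charpoly, Matrix.det_fin_two]
    rw [Matrix.charmatrix_apply_eq, Matrix.charmatrix_apply_eq,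
      Matrix.charmatrix_apply_ne _ _ _ (by decide),
      Matrix.charmatrix_apply_ne _ _ _ (by decide)]
    have e00 : A 0 0 = a - 2 * ξ ^ 2 := rfl
    have e01 : A 0 1 = 2 * ξ := rfl
    have e10 : A 1 0 = 2 * ξ := rfl
    have e11 : A 1 1 = -2 := rfl
    rw [e00, e01, e10, e11]
    have h1 : C (4 * ξ ^ 2) = C (2 * ξ) * C (2 * ξ) := by rw [← C_mul]; ring_nf
    have h2 : C (-2 : ℝ) = -C 2 := by simp
    rw [h1, h2]
    ring
  have hP : (hessPvt N a ξ i₀).charpoly =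
      (X + C 2) ^ (N - 1) *
        ((X + C 2) * (X - C (a - 2 * ξ ^ 2)) - C (4 * ξ ^ 2)) := by
    rw [key2, Matrix.charpoly_reindex, Matrix.charpoly_fromBlocks_zero₂₁,
      charpoly_diag_const, hcardS, hA]
    have : (X - C (-2 : ℝ)) = X + C 2 := by simp
    rw [this, mul_comm]
  refine ⟨hP, ?_, ?_⟩
  · have hne : (hessPvt N a ξ i₀).charpoly ≠ 0 :=
      (Matrix.charpoly_monic _).ne_zero
    rw [Polynomial.le_rootMultiplicity_iff hne, hP]
    have : (X - C (-2 : ℝ)) = X + C 2 := by simp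
    rw [this]
    exact Dvd.intro _ rfl
  · intro x hroot hne2
    rw [hP] at hroot
    simp only [IsRoot, eval_mul, eval_pow, eval_add, eval_sub, eval_X, eval_C,
      mul_eq_zero, pow_eq_zero_iff'] at hroot
    have hx2 : x + 2 ≠ 0 := fun h => hne2 (by linarith)
    have h : (x + 2) * (x - (a - 2 * ξ ^ 2)) - 4 * ξ ^ 2 = 0 := by
      rcases hroot with h | h
      · exact absurd h.1 hx2
      · exact h
    linear_combination h
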